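/- For every d ∈ H_b, both right multiplication x ↦ xd and left multiplication x ↦ dx are automorphisms of the poset (WH_b, ≤), i.e., x ≤ y if and only if xd ≤ yd, and x ≤ y if and only if dx ≤ dy. -/

import Mathlib

noncomputable section

open scoped Pointwise

/-- The general linear group `GL_n(K)`. -/
abbrev GLn (K : Type) [Field K] (n : ℕ) : Type := GL (Fin n) K

/-- `g` is a permutation matrix. -/
def IsPermMat {K : Type} [Field K] {n : ℕ} (g : GLn K n) : Prop :=
  ∃ σ : Equiv.Perm (Fin n),
    ∀ i j : Fin n, (g : Matrix (Fin n) (Fin n) K) i j = if σ j = i then 1 else 0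

/-- `W`, the group of permutation matrices in `GL_n(K)`. -/
def Wset (K : Type) [Field K] (n : ℕ) : Set (GLn K n) := {g | IsPermMat g}

/-- The set `S = {s_1, …, s_{n-1}}` of Coxeter generators of `W`: the matrices of the
adjacent transpositions `(i, i+1)`. -/
def Sset (K : Type) [Field K] (n : ℕ) : Set (GLn K n) :=
  {g | ∃ i j : Fin n, (i : ℕ) + 1 = (j : ℕ) ∧
    ∀ k l : Fin n, (g : Matrix (Fin n) (Fin n) K) k l = if Equiv.swap i j l = k then 1 else 0}

/-- The set `𝒯 = { w s_i w⁻¹ : w ∈ W, s_i ∈ S }` of reflections of `W`. -/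
def Tset (K : Type) [Field K] (n : ℕ) : Set (GLn K n) :=
  {t | ∃ w ∈ Wset K n, ∃ s ∈ Sset K n, t = w * s * w⁻¹}

/-- `H_b`: the group of diagonal matrices whose entries are `b`-th roots of unity
(i.e. entries in `F_b`). -/
def Hbset (K : Type) [Field K] (n b : ℕ) : Set (GLn K n) :=
  {g | (∀ i j : Fin n, i ≠ j → (g : Matrix (Fin n) (Fin n) K) i j = 0) ∧
    ∀ i : Fin n, (g : Matrix (Fin n) (Fin n) K) i i ^ b = 1}

/-- The group `WH_b`: the set of products `w * d` with `w ∈ W` and `d ∈ H_b`. -/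
def WHbset (K : Type) [Field K] (n b : ℕ) : Set (GLn K n) :=
  {x | ∃ w ∈ Wset K n, ∃ d ∈ Hbset K n b, x = w * d}

/-- The length function on monomial matrices: the number of inversions of the underlying
permutation.  For `x = w d ∈ WH_b` this is the Coxeter length `ℓ(w)`, i.e. `len` is the
length function of `W` lifted to `WH_b` via `ℓ(wd) = ℓ(dw) = ℓ(w)`. -/
def len {K : Type} [Field K] {n : ℕ} (g : GLn K n) : ℕ :=
  Set.ncard {p : Fin n × Fin n | p.1 < p.2 ∧ ∃ i i' : Fin n, i' < i ∧
    (g : Matrix (Fin n) (Fin n) K) i p.1 ≠ 0 ∧ (g : Matrix (Fin n) (Fin n) K) i' p.2 ≠ 0}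

/-- The diagonal matrix `h_{k,l}(α) = h_k(α) h_l((-1)^{b-1} α⁻¹)`. -/
def hmat (K : Type) [Field K] {n : ℕ} (b : ℕ) (k l : Fin n) (α : K) :
    Matrix (Fin n) (Fin n) K :=
  Matrix.diagonal fun p => if p = k then α else if p = l then (-1 : K) ^ (b - 1) * α⁻¹ else 1

/-- For a reflection `t` interchanging the `k`-th and `l`-th standard basis vectors
(`t = w s_i w⁻¹`), the subset `X_t = { w h_{i,i+1}(α) w⁻¹ : α ∈ F_b } =
{ h_{k,l}(α) : α^b = 1 }` of `H_b`. -/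
def Xset (K : Type) [Field K] (n b : ℕ) (t : GLn K n) : Set (GLn K n) :=
  {d | ∃ k l : Fin n, ∃ α : K, α ^ b = 1 ∧ k ≠ l ∧
    (∀ p q : Fin n, (t : Matrix (Fin n) (Fin n) K) p q = if Equiv.swap k l q = p then 1 else 0) ∧
    (d : Matrix (Fin n) (Fin n) K) = hmat K b k l α}

/-- `X_s = { h_{k,l}(α) : α^b = 1 }` for the simple reflection `s` interchanging the
`k`-th and `l`-th standard basis vectors. -/
def XsPair (K : Type) [Field K] {n : ℕ} (b : ℕ) (k l : Fin n) : Set (GLn K n) :=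
  {d | ∃ α : K, α ^ b = 1 ∧ (d : Matrix (Fin n) (Fin n) K) = hmat K b k l α}

/-- The product `X_1 ⋯ X_r` of a list of subsets of a monoid. -/
def SetProd {G : Type} [Monoid G] : List (Set G) → Set G
  | [] => {1}
  | X :: L => X * SetProd L

/-- `U`: the group of upper triangular unipotent matrices. -/
def Uset (K : Type) [Field K] (n : ℕ) : Set (GLn K n) :=
  {g | (∀ i j : Fin n, j < i → (g : Matrix (Fin n) (Fin n) K) i j = 0) ∧
    ∀ i : Fin n, (g : Matrix (Fin n) (Fin n) K) i i = 1}

/-- `H_a`: the group of diagonal matrices with entries in `F_a` (the `a`-th roots of unity). -/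
def Haset (K : Type) [Field K] (n a : ℕ) : Set (GLn K n) :=
  {g | (∀ i j : Fin n, i ≠ j → (g : Matrix (Fin n) (Fin n) K) i j = 0) ∧
    ∀ i : Fin n, (g : Matrix (Fin n) (Fin n) K) i i ^ a = 1}

/-- `B_a = H_a U`. -/
def Baset (K : Type) [Field K] (n a : ℕ) : Set (GLn K n) :=
  {g | ∃ h ∈ Haset K n a, ∃ u ∈ Uset K n, g = h * u}

/-- `A_v = ℤ[a, v, v⁻¹]`, realized as polynomials in the indeterminate `a` with
coefficients Laurent polynomials in the indeterminate `v`. -/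
abbrev Av : Type := Polynomial (LaurentPolynomial ℤ)

/-- The indeterminate `a` of `A_v`. -/
def aA : Av := Polynomial.X

/-- The indeterminate `v` of `A_v`. -/
def vA : Av := Polynomial.C (LaurentPolynomial.T 1)

/-- `v⁻¹ ∈ A_v`. -/
def vI : Av := Polynomial.C (LaurentPolynomial.T (-1))

namespace Aux
variable {K : Type} [Field K] {n b : ℕ}

lemma permL {σ : Equiv.Perm (Fin n)} {W : Matrix (Fin n) (Fin n) K}
    (hσ : ∀ i j, W i j = if σ j = i then 1 else 0) (M : Matrix (Fin n) (Fin n) K)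
    (i j : Fin n) : (W * M) i j = M (σ⁻¹ i) j := by
  rw [Matrix.mul_apply]
  rw [Finset.sum_eq_single (σ⁻¹ i)]
  · rw [hσ, if_pos (by simp), one_mul]
  · intro k _ hk
    rw [hσ, if_neg, zero_mul]
    intro h
    exact hk (by rw [← h]; simp)
  · simp

lemma permR {σ : Equiv.Perm (Fin n)} {W : Matrix (Fin n) (Fin n) K}
    (hσ : ∀ i j, W i j = if σ j = i then 1 else 0) (M : Matrix (Fin n) (Fin n) K)
    (i j : Fin n) : (M * W) i j = M i (σ j) := by
  rw [Matrix.mul_apply]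
  rw [Finset.sum_eq_single (σ j)]
  · rw [hσ, if_pos rfl, mul_one]
  · intro k _ hk
    rw [hσ, if_neg (fun h => hk h.symm), mul_zero]
  · simp

lemma one_mem_W : (1 : GLn K n) ∈ Wset K n := by
  refine ⟨1, fun i j => ?_⟩
  rw [Units.val_one, Matrix.one_apply]
  simp [eq_comm]

lemma W_inv' {w : GLn K n} (σ : Equiv.Perm (Fin n))
    (hσ : ∀ i j, (↑w : Matrix (Fin n) (Fin n) K) i j = if σ j = i then 1 else 0) :
    ∀ i j, (↑(w⁻¹) : Matrix (Fin n) (Fin n) K) i j = if σ⁻¹ j = i then 1 else 0 := by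
  set P : Matrix (Fin n) (Fin n) K := Matrix.of fun i j => if σ⁻¹ j = i then 1 else 0 with hP
  have key : (↑w : Matrix (Fin n) (Fin n) K) * P = 1 := by
    ext i j
    rw [permL hσ]
    have : P (σ⁻¹ i) j = if σ⁻¹ j = σ⁻¹ i then 1 else 0 := rfl
    rw [this, Matrix.one_apply]
    refine if_congr ?_ rfl rfl
    constructor
    · intro h; have := congrArg σ h; simpa [eq_comm] using this
    · rintro rfl; rfl
  have hmat : (↑(w⁻¹) : Matrix (Fin n) (Fin n) K) = P := by
    calc (↑(w⁻¹) : Matrix (Fin n) (Fin n) K)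
        = ↑(w⁻¹) * ((↑w : Matrix (Fin n) (Fin n) K) * P) := by rw [key, mul_one]
      _ = ((↑(w⁻¹) : Matrix (Fin n) (Fin n) K) * ↑w) * P := by rw [mul_assoc]
      _ = P := by rw [← Units.val_mul, inv_mul_cancel, Units.val_one, one_mul]
  intro i j
  rw [hmat]
  rfl

lemma W_inv {w : GLn K n} (hw : w ∈ Wset K n) : w⁻¹ ∈ Wset K n := by
  obtain ⟨σ, hσ⟩ := hw
  exact ⟨σ⁻¹, W_inv' σ hσ⟩

lemma W_mul {w w' : GLn K n} (hw : w ∈ Wset K n) (hw' : w' ∈ Wset K n) :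
    w * w' ∈ Wset K n := by
  obtain ⟨σ, hσ⟩ := hw
  obtain ⟨τ, hτ⟩ := hw'
  refine ⟨σ * τ, fun i j => ?_⟩
  rw [Units.val_mul, permL hσ, hτ]
  refine if_congr ?_ rfl rfl
  rw [Equiv.Perm.eq_inv_iff_eq]
  rfl

lemma one_mem_Hb : (1 : GLn K n) ∈ Hbset K n b := by
  constructor
  · intro i j hij; rw [Units.val_one]; exact Matrix.one_apply_ne hij
  · intro i; rw [Units.val_one, Matrix.one_apply_eq, one_pow]

lemma Hb_mul {d d' : GLn K n} (hd : d ∈ Hbset K n b) (hd' : d' ∈ Hbset K n b) :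
    d * d' ∈ Hbset K n b := by
  have key : ∀ i j, (↑(d * d') : Matrix (Fin n) (Fin n) K) i j
      = (↑d : Matrix (Fin n) (Fin n) K) i i * (↑d' : Matrix (Fin n) (Fin n) K) i j := by
    intro i j
    rw [Units.val_mul, Matrix.mul_apply, Finset.sum_eq_single i]
    · intro k _ hk; rw [hd.1 i k (fun h => hk h.symm), zero_mul]
    · simp
  constructor
  · intro i j hij; rw [key, hd'.1 i j hij, mul_zero]
  · intro i; rw [key, mul_pow, hd.2, hd'.2, one_mul]

lemma Hb_diag_ne (hb : 0 < b) {d : GLn K n} (hd : d ∈ Hbset K n b) (i : Fin n) :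
    (↑d : Matrix (Fin n) (Fin n) K) i i ≠ 0 := by
  intro h
  have := hd.2 i
  rw [h, zero_pow hb.ne'] at this
  exact zero_ne_one this

lemma Hb_inv (hb : 0 < b) {d : GLn K n} (hd : d ∈ Hbset K n b) : d⁻¹ ∈ Hbset K n b := by
  have key : ∀ i j, (↑(d⁻¹) : Matrix (Fin n) (Fin n) K) i j
      * (↑d : Matrix (Fin n) (Fin n) K) j j = if i = j then 1 else 0 := by
    intro i j
    have h1 : ((↑(d⁻¹) : Matrix (Fin n) (Fin n) K) * (↑d : Matrix (Fin n) (Fin n) K)) i j = if i = j then 1 else 0 := by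
      rw [← Units.val_mul, inv_mul_cancel, Units.val_one, Matrix.one_apply]
    rw [← h1, Matrix.mul_apply, Finset.sum_eq_single j]
    · intro k _ hk; rw [hd.1 k j hk, mul_zero]
    · simp
  constructor
  · intro i j hij
    have := key i j
    rw [if_neg hij] at this
    exact (mul_eq_zero.mp this).resolve_right (Hb_diag_ne hb hd j)
  · intro i
    have := key i i
    rw [if_pos rfl] at this
    have h2 : (↑(d⁻¹) : Matrix (Fin n) (Fin n) K) i i
        = ((↑d : Matrix (Fin n) (Fin n) K) i i)⁻¹ := by
      exact eq_inv_of_mul_eq_one_left this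
    rw [h2, inv_pow, hd.2, inv_one]

lemma Hb_conj {w d : GLn K n} (hw : w ∈ Wset K n) (hd : d ∈ Hbset K n b) :
    w * d * w⁻¹ ∈ Hbset K n b := by
  obtain ⟨σ, hσ⟩ := hw
  have hτ := W_inv' σ hσ
  have key : ∀ i j, (↑(w * d * w⁻¹) : Matrix (Fin n) (Fin n) K) i j
      = (↑d : Matrix (Fin n) (Fin n) K) (σ⁻¹ i) (σ⁻¹ j) := by
    intro i j
    rw [Units.val_mul, permR hτ, Units.val_mul, permL hσ]
  constructor
  · intro i j hij
    rw [key]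
    exact hd.1 _ _ (fun h => hij (by simpa using congrArg σ h))
  · intro i
    rw [key]
    exact hd.2 _

lemma WHb_mulR {x d : GLn K n} (hx : x ∈ WHbset K n b) (hd : d ∈ Hbset K n b) :
    x * d ∈ WHbset K n b := by
  obtain ⟨w, hw, d', hd', rfl⟩ := hx
  exact ⟨w, hw, d' * d, Hb_mul hd' hd, by rw [mul_assoc]⟩

lemma Hb_sub_WHb {d : GLn K n} (hd : d ∈ Hbset K n b) : d ∈ WHbset K n b :=
  ⟨1, one_mem_W, d, hd, by rw [one_mul]⟩

lemma WHb_mulL {x d : GLn K n} (hx : x ∈ WHbset K n b) (hd : d ∈ Hbset K n b) :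
    d * x ∈ WHbset K n b := by
  obtain ⟨w, hw, d', hd', rfl⟩ := hx
  refine ⟨w, hw, (w⁻¹ * d * w) * d', Hb_mul (Hb_conj (W_inv hw) ?_) hd', by group⟩
  simpa using hd

lemma WHb_inv (hb : 0 < b) {x : GLn K n} (hx : x ∈ WHbset K n b) :
    x⁻¹ ∈ WHbset K n b := by
  obtain ⟨w, hw, d', hd', rfl⟩ := hx
  refine ⟨w⁻¹, W_inv hw, w * d'⁻¹ * w⁻¹, Hb_conj hw (Hb_inv hb hd'), by group⟩

lemma WHb_finite (hb : 0 < b) : (WHbset K n b).Finite := by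
  classical
  set F : Set K := {z | z ^ b = 1} ∪ {0} with hF
  have hFfin : F.Finite := by
    apply Set.Finite.union _ (Set.finite_singleton 0)
    have : {z : K | z ^ b = 1} ⊆ ↑(Polynomial.nthRoots b (1 : K)).toFinset := by
      intro z hz
      simp only [Multiset.mem_toFinset, Finset.coe_sort_coe, Finset.mem_coe]
      rw [Polynomial.mem_nthRoots hb]
      exact hz
    exact Set.Finite.subset (Finset.finite_toSet _) this
  have hMS : {M : Matrix (Fin n) (Fin n) K | ∀ i j, M i j ∈ F}.Finite := by
    have h1 : {r : Fin n → K | ∀ j, r j ∈ F}.Finite := by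
      have := Set.Finite.pi (fun _ : Fin n => hFfin)
      refine this.subset ?_
      intro r hr
      exact fun i _ => hr i
    have h2 := Set.Finite.pi (fun _ : Fin n => h1)
    refine h2.subset ?_
    intro M hM
    exact fun i _ => fun j => hM i j
  have hsub : WHbset K n b ⊆ (fun g : GLn K n => (↑g : Matrix (Fin n) (Fin n) K)) ⁻¹'
      {M : Matrix (Fin n) (Fin n) K | ∀ i j, M i j ∈ F} := by
    rintro x ⟨w, ⟨σ, hσ⟩, d, hd, rfl⟩
    intro i j
    show (↑(w * d) : Matrix (Fin n) (Fin n) K) i j ∈ F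
    rw [Units.val_mul, permL hσ]
    by_cases h : σ⁻¹ i = j
    · subst h
      exact Or.inl (hd.2 _)
    · rw [hd.1 _ _ h]
      exact Or.inr rfl
  refine Set.Finite.subset (Set.Finite.preimage ?_ hMS) hsub
  intro x _ y _ h
  exact Units.ext h

end Aux

lemma vAvI : vA * vI = 1 := by
  rw [vA, vI, ← Polynomial.C_mul, ← LaurentPolynomial.T_add]
  norm_num

lemma barA_barA (barA : Av →+* Av) (hv : barA vA = vI) (ha : barA aA = -(aA * vI ^ 2)) :
    ∀ p, barA (barA p) = p := by
  have hvI : barA vI = vA := by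
    have h1 : vI * barA vI = 1 := by
      calc vI * barA vI = barA (vA * vI) := by rw [map_mul, hv]
      _ = 1 := by rw [vAvI, map_one]
    calc barA vI = (vA * vI) * barA vI := by rw [vAvI, one_mul]
    _ = vA * (vI * barA vI) := by ring
    _ = vA := by rw [h1, mul_one]
  have hgX : barA (barA aA) = aA := by
    rw [ha, map_neg, map_mul, map_pow, ha, hvI]
    have : vI * vA = 1 := by rw [mul_comm]; exact vAvI
    ring_nf
    rw [mul_assoc, ← mul_pow, this]
    ring
  have hT : ∀ m : ℤ, barA (barA (Polynomial.C (LaurentPolynomial.T m)))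
      = Polynomial.C (LaurentPolynomial.T m) := by
    intro m
    rcases m with m | m
    · have : Polynomial.C (LaurentPolynomial.T (Int.ofNat m)) = vA ^ m := by
        rw [vA, ← map_pow, LaurentPolynomial.T_pow]
        congr 2
        simp only [Int.ofNat_eq_coe, Int.negSucc_eq]
        push_cast
        ring
      rw [this, map_pow, map_pow, hv, hvI]
    · have : Polynomial.C (LaurentPolynomial.T (Int.negSucc m)) = vI ^ (m + 1) := by
        rw [vI, ← map_pow, LaurentPolynomial.T_pow]
        congr 2
        simp only [Int.ofNat_eq_coe, Int.negSucc_eq]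
        push_cast
        ring
      rw [this, map_pow, map_pow, hvI, hv]
  have hC : ∀ q, barA (barA (Polynomial.C q)) = Polynomial.C q := by
    intro q
    induction q using LaurentPolynomial.induction_on' with
    | add p q hp hq => rw [map_add, map_add, map_add, hp, hq]
    | C_mul_T n a =>
        have hca : (LaurentPolynomial.C a : LaurentPolynomial ℤ) = (a : LaurentPolynomial ℤ) :=
          eq_intCast (LaurentPolynomial.C : ℤ →+* LaurentPolynomial ℤ) a
        rw [map_mul, hca, map_mul, map_intCast, map_intCast, map_mul, map_intCast, hT]
  intro p
  induction p using Polynomial.induction_on' with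
  | add p q hp hq => rw [map_add, map_add, hp, hq]
  | monomial n a =>
      rw [← Polynomial.C_mul_X_pow_eq_monomial, map_mul, map_mul, map_pow, map_pow, hC,
        show (Polynomial.X : Av) = aA from rfl, hgX]


section MainAux
open Aux

theorem main_helper (n b : ℕ) (hn : 0 < n) (hb : 0 < b)
    (Hv : Type) [Ring Hv] [Algebra Av Hv]
    (T : GLn ℂ n → Hv)
    (bv : Module.Basis ↥(WHbset ℂ n b) Av Hv)
    (hbv : ∀ x : ↥(WHbset ℂ n b), bv x = T ↑x)
    (hT1 : T 1 = 1)
    (hTd : ∀ d ∈ Hbset ℂ n b, ∀ x ∈ WHbset ℂ n b,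
      T d * T x = T (d * x) ∧ T x * T d = T (x * d))
    (barA : Av →+* Av)
    (hbarv : barA vA = vI) (hbara : barA aA = -(aA * vI ^ 2))
    (barH : Hv → Hv)
    (hbarHT : ∀ x ∈ WHbset ℂ n b, barH (T x) * T x⁻¹ = 1 ∧ T x⁻¹ * barH (T x) = 1)
    (Rp : GLn ℂ n → GLn ℂ n → Av)
    (hRp : ∀ y ∈ WHbset ℂ n b, barH (T y) = ∑ᶠ x ∈ WHbset ℂ n b, barA (Rp x y) • T x) :
    ∀ d ∈ Hbset ℂ n b, ∀ x ∈ WHbset ℂ n b, ∀ y ∈ WHbset ℂ n b,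
      (Rp x y ≠ 0 ↔ Rp (x * d) (y * d) ≠ 0) ∧
      (Rp x y ≠ 0 ↔ Rp (d * x) (d * y) ≠ 0) := by
  classical
  have hS : (WHbset ℂ n b).Finite := WHb_finite hb
  haveI : Fintype ↥(WHbset ℂ n b) := hS.fintype
  -- injectivity of barA
  have hbb := barA_barA barA hbarv hbara
  have hinj : Function.Injective barA := by
    intro p q h
    calc p = barA (barA p) := (hbb p).symm
      _ = barA (barA q) := by rw [h]
      _ = q := hbb q
  -- finsum to finite sums over the subtype
  have hRp' : ∀ y ∈ WHbset ℂ n b,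
      barH (T y) = ∑ x : ↥(WHbset ℂ n b), barA (Rp ↑x y) • T ↑x := by
    intro y hy
    rw [hRp y hy, finsum_mem_eq_finite_toFinset_sum _ hS,
      Finset.sum_subtype _ (fun x => hS.mem_toFinset)]
  -- coefficient extraction
  have hcoef : ∀ c c' : ↥(WHbset ℂ n b) → Av,
      (∑ x : ↥(WHbset ℂ n b), c x • T ↑x) = (∑ x : ↥(WHbset ℂ n b), c' x • T ↑x) →
      ∀ x, c x = c' x := by
    intro c c' h x
    have h0 : ∑ i : ↥(WHbset ℂ n b), (c i - c' i) • bv i = 0 := by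
      have hterm : ∀ i : ↥(WHbset ℂ n b), (c i - c' i) • bv i = c i • T ↑i - c' i • T ↑i := by
        intro i; rw [hbv]; exact sub_smul (c i) (c' i) (T ↑i)
      rw [Finset.sum_congr rfl (fun i _ => hterm i), Finset.sum_sub_distrib, h, sub_self]
    have := Fintype.linearIndependent_iff.mp bv.linearIndependent (fun i => c i - c' i) h0 x
    exact sub_eq_zero.mp this
  -- uniqueness of two-sided inverses
  have huniq : ∀ a a' c : Hv, a * c = 1 → c * a = 1 → a' * c = 1 → c * a' = 1 → a = a' := by
    intro a a' c h1 _ _ h4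
    calc a = a * (c * a') := by rw [h4, mul_one]
      _ = (a * c) * a' := by rw [mul_assoc]
      _ = a' := by rw [h1, one_mul]
  intro d hd x hx y hy
  have hdi : d⁻¹ ∈ Hbset ℂ n b := Hb_inv hb hd
  have hyi : y⁻¹ ∈ WHbset ℂ n b := WHb_inv hb hy
  have e1 : T ↑d * T ↑d⁻¹ = 1 := by
    rw [(hTd d hd d⁻¹ (Hb_sub_WHb hdi)).1, mul_inv_cancel, hT1]
  have e2 : T ↑d⁻¹ * T ↑d = 1 := by
    rw [(hTd d⁻¹ hdi d (Hb_sub_WHb hd)).1, inv_mul_cancel, hT1]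
  have hyd : y * d ∈ WHbset ℂ n b := WHb_mulR hy hd
  have hdy : d * y ∈ WHbset ℂ n b := WHb_mulL hy hd
  -- right multiplication claim
  have hAr : barH (T (y * d)) = barH (T y) * T d := by
    have hTz : T ((y * d)⁻¹) = T ↑d⁻¹ * T ↑y⁻¹ := by
      rw [mul_inv_rev]
      exact ((hTd d⁻¹ hdi y⁻¹ hyi).1).symm
    refine (huniq _ _ (T ((y * d)⁻¹)) ?_ ?_ (hbarHT (y * d) hyd).1 (hbarHT (y * d) hyd).2).symm
    · rw [hTz]
      calc barH (T y) * T ↑d * (T ↑d⁻¹ * T ↑y⁻¹)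
          = barH (T y) * (T ↑d * T ↑d⁻¹) * T ↑y⁻¹ := by simp only [mul_assoc]
        _ = barH (T y) * T ↑y⁻¹ := by rw [e1, mul_one]
        _ = 1 := (hbarHT y hy).1
    · rw [hTz]
      calc T ↑d⁻¹ * T ↑y⁻¹ * (barH (T y) * T ↑d)
          = T ↑d⁻¹ * (T ↑y⁻¹ * barH (T y)) * T ↑d := by rw [mul_assoc, mul_assoc, mul_assoc]
        _ = T ↑d⁻¹ * T ↑d := by rw [(hbarHT y hy).2, mul_one]
        _ = 1 := e2
  -- left multiplication claim
  have hAl : barH (T (d * y)) = T d * barH (T y) := by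
    have hTz : T ((d * y)⁻¹) = T ↑y⁻¹ * T ↑d⁻¹ := by
      rw [mul_inv_rev]
      exact ((hTd d⁻¹ hdi y⁻¹ hyi).2).symm
    refine (huniq _ _ (T ((d * y)⁻¹)) ?_ ?_ (hbarHT (d * y) hdy).1 (hbarHT (d * y) hdy).2).symm
    · rw [hTz]
      calc T ↑d * barH (T y) * (T ↑y⁻¹ * T ↑d⁻¹)
          = T ↑d * (barH (T y) * T ↑y⁻¹) * T ↑d⁻¹ := by rw [mul_assoc, mul_assoc, mul_assoc]
        _ = T ↑d * T ↑d⁻¹ := by rw [(hbarHT y hy).1, mul_one]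
        _ = 1 := e1
    · rw [hTz]
      calc T ↑y⁻¹ * T ↑d⁻¹ * (T ↑d * barH (T y))
          = T ↑y⁻¹ * (T ↑d⁻¹ * T ↑d) * barH (T y) := by rw [mul_assoc, mul_assoc, mul_assoc]
        _ = T ↑y⁻¹ * barH (T y) := by rw [e2, mul_one]
        _ = 1 := (hbarHT y hy).2
  -- the reindexing equivalences
  let eR : ↥(WHbset ℂ n b) ≃ ↥(WHbset ℂ n b) :=
    { toFun := fun z => ⟨↑z * d, WHb_mulR z.2 hd⟩
      invFun := fun z => ⟨↑z * d⁻¹, WHb_mulR z.2 hdi⟩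
      left_inv := fun z => by ext : 1; simp [mul_inv_cancel_right]
      right_inv := fun z => by ext : 1; simp [inv_mul_cancel_right] }
  let eL : ↥(WHbset ℂ n b) ≃ ↥(WHbset ℂ n b) :=
    { toFun := fun z => ⟨d * ↑z, WHb_mulL z.2 hd⟩
      invFun := fun z => ⟨d⁻¹ * ↑z, WHb_mulL z.2 hdi⟩
      left_inv := fun z => by ext : 1; simp [inv_mul_cancel_left]
      right_inv := fun z => by ext : 1; simp [mul_inv_cancel_left] }
  -- right key
  have keyR : barA (Rp (x * d) (y * d)) = barA (Rp x y) := by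
    have hexp : barH (T (y * d)) = ∑ z : ↥(WHbset ℂ n b), barA (Rp (↑z * d⁻¹) y) • T ↑z := by
      rw [hAr, hRp' y hy, Finset.sum_mul]
      have hterm : ∀ z : ↥(WHbset ℂ n b),
          (barA (Rp ↑z y) • T ↑z) * T ↑d = barA (Rp (↑(eR z) * d⁻¹) y) • T ↑(eR z) := by
        intro z
        rw [smul_mul_assoc, (hTd d hd ↑z z.2).2]
        simp [eR, mul_inv_cancel_right]
      rw [Finset.sum_congr rfl (fun z _ => hterm z)]
      exact Equiv.sum_comp eR (fun z => barA (Rp (↑z * d⁻¹) y) • T ↑z)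
    have := hcoef _ _ ((hRp' (y * d) hyd).symm.trans hexp) ⟨x * d, WHb_mulR hx hd⟩
    simpa [mul_inv_cancel_right] using this
  -- left key
  have keyL : barA (Rp (d * x) (d * y)) = barA (Rp x y) := by
    have hexp : barH (T (d * y)) = ∑ z : ↥(WHbset ℂ n b), barA (Rp (d⁻¹ * ↑z) y) • T ↑z := by
      rw [hAl, hRp' y hy, Finset.mul_sum]
      have hterm : ∀ z : ↥(WHbset ℂ n b),
          T ↑d * (barA (Rp ↑z y) • T ↑z) = barA (Rp (d⁻¹ * ↑(eL z)) y) • T ↑(eL z) := by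
        intro z
        rw [mul_smul_comm, (hTd d hd ↑z z.2).1]
        simp [eL, inv_mul_cancel_left]
      rw [Finset.sum_congr rfl (fun z _ => hterm z)]
      exact Equiv.sum_comp eL (fun z => barA (Rp (d⁻¹ * ↑z) y) • T ↑z)
    have := hcoef _ _ ((hRp' (d * y) hdy).symm.trans hexp) ⟨d * x, WHb_mulL hx hd⟩
    simpa [inv_mul_cancel_left] using this
  constructor
  · rw [hinj keyR]
  · rw [hinj keyL]

end MainAux

/-- For every `d ∈ H_b`, right and left multiplication by `d` are
automorphisms of the poset `(WH_b, ≤)`, where `x ≤ y ↔ R*_{x,y} ≠ 0`. -/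
theorem multiplication_by_d_poset_automorphism (n b : ℕ) (hn : 0 < n) (hb : 0 < b)
    (Hv : Type) [Ring Hv] [Algebra Av Hv]
    (T : GLn ℂ n → Hv)
    (bv : Module.Basis ↥(WHbset ℂ n b) Av Hv)
    (hbv : ∀ x : ↥(WHbset ℂ n b), bv x = T ↑x)
    (hT1 : T 1 = 1)
    (hTd : ∀ d ∈ Hbset ℂ n b, ∀ x ∈ WHbset ℂ n b,
      T d * T x = T (d * x) ∧ T x * T d = T (x * d))
    (hTsL : ∀ s ∈ Sset ℂ n, ∀ x ∈ WHbset ℂ n b,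
      (len x < len (s * x) → T s * T x = T (s * x)) ∧
      (len (s * x) < len x →
        T s * T x = T (s * x) + (aA * vI) • ∑ᶠ d ∈ Xset ℂ n b s, T (d * x)))
    (hTsR : ∀ s ∈ Sset ℂ n, ∀ x ∈ WHbset ℂ n b,
      (len x < len (x * s) → T x * T s = T (x * s)) ∧
      (len (x * s) < len x →
        T x * T s = T (x * s) + (aA * vI) • ∑ᶠ d ∈ Xset ℂ n b s, T (x * d)))
    (barA : Av →+* Av)
    (hbarv : barA vA = vI) (hbara : barA aA = -(aA * vI ^ 2))
    (barH : Hv → Hv)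
    (hbarHadd : ∀ h h' : Hv, barH (h + h') = barH h + barH h')
    (hbarHsmul : ∀ (c : Av) (h : Hv), barH (c • h) = barA c • barH h)
    (hbarHT : ∀ x ∈ WHbset ℂ n b, barH (T x) * T x⁻¹ = 1 ∧ T x⁻¹ * barH (T x) = 1)
    (Rp : GLn ℂ n → GLn ℂ n → Av)
    (hRp : ∀ y ∈ WHbset ℂ n b, barH (T y) = ∑ᶠ x ∈ WHbset ℂ n b, barA (Rp x y) • T x) :
    ∀ d ∈ Hbset ℂ n b, ∀ x ∈ WHbset ℂ n b, ∀ y ∈ WHbset ℂ n b,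
      (Rp x y ≠ 0 ↔ Rp (x * d) (y * d) ≠ 0) ∧
      (Rp x y ≠ 0 ↔ Rp (d * x) (d * y) ≠ 0) := by
  intro d hd x hx y hy
  exact main_helper n b hn hb Hv T bv hbv hT1 hTd barA hbarv hbara barH hbarHT Rp hRp d hd x hx y hy
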